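/- Let 𝔟 and 𝔟' be finite sets of n-tuples of finite multisets of points such that: (i) any two elements of 𝔟 are isomorphic (related by a partial injection of atoms acting componentwise), and likewise for 𝔟'; (ii) within 𝔟, distinct elements have disjoint atom sets, and likewise within 𝔟'; (iii) some element of 𝔟 is isomorphic to some element of 𝔟'; (iv) |𝔟| = |𝔟'|. Then there is a single partial injection ρ of atoms and a bijection φ : 𝔟 → 𝔟' such that ρ · r = φ(r) for every r ∈ 𝔟. -/

import Mathlib

inductive Pt (A : Type) : Type where
  | atom : A → Pt A
  | star : Bool → Pt A
  | pair : Bool → Pt A → Pt A → Pt A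
  | bag  : Bool → List (Pt A) → Pt A

namespace Pt

variable {A : Type}

/-- The homomorphic extension to points of a map on atoms. -/
def rename (t : A → A) : Pt A → Pt A
  | .atom γ => .atom (t γ)
  | .star ι => .star ι
  | .pair ι a b => .pair ι (rename t a) (rename t b)
  | .bag ι l => .bag ι (l.attach.map (fun x => rename t x.1))
decreasing_by
  all_goals first
    | (simp; omega)
    | (have := List.sizeOf_lt_of_mem x.2; simp; omega)
    | simp

/-- The set of atoms occurring in a point. -/
def At : Pt A → Set A
  | .atom γ => {γ}
  | .star _ => ∅
  | .pair _ a b => At a ∪ At b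
  | .bag _ l => ⋃ x ∈ l.attach, At x.1
decreasing_by
  all_goals first
    | (simp; omega)
    | (have := List.sizeOf_lt_of_mem x.2; simp; omega)
    | simp

/-- The set of atoms occurring in a finite multiset of points. -/
def AtM (b : Multiset (Pt A)) : Set A :=
  ⋃ α ∈ b, At α

/-- The set of atoms occurring in an `n`-tuple of multisets of points. -/
def AtT {n : ℕ} (r : Fin n → Multiset (Pt A)) : Set A :=
  ⋃ i, AtM (r i)

/-- Two tuples of multisets of points are isomorphic when they are related by
a partial injection of atoms acting componentwise. -/
def Iso {n : ℕ} (r r' : Fin n → Multiset (Pt A)) : Prop :=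
  ∃ (f : A → A) (dom : Set A), Set.InjOn f dom ∧ AtT r ⊆ dom ∧
    ∀ i, (r i).map (rename f) = r' i

lemma At_atom (γ : A) : At (.atom γ : Pt A) = {γ} := by rw [At.eq_def]
lemma At_star (ι : Bool) : At (.star ι : Pt A) = ∅ := by rw [At.eq_def]
lemma At_pair (ι : Bool) (a b : Pt A) : At (.pair ι a b) = At a ∪ At b := by rw [At.eq_def]

lemma rename_bag (f : A → A) (ι : Bool) (l : List (Pt A)) :
    rename f (.bag ι l) = .bag ι (l.map (rename f)) := by
  rw [rename]; simp [List.attach_map_val]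

lemma At_bag (ι : Bool) (l : List (Pt A)) :
    At (.bag ι l : Pt A) = ⋃ x ∈ l, At x := by
  rw [At]; ext a; simp

lemma rename_congr {f g : A → A} (p : Pt A) (h : ∀ a ∈ At p, f a = g a) :
    rename f p = rename g p := by
  induction p using At.induct with
  | case1 γ => simp only [rename]; rw [h]; rw [At_atom]; rfl
  | case2 ι => simp only [rename]
  | case3 ι a b iha ihb =>
      rw [At_pair] at h
      simp only [rename]
      rw [iha (fun a ha => h a (Or.inl ha)), ihb (fun a ha => h a (Or.inr ha))]
  | case4 ι l ih =>
      rw [At_bag] at h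
      rw [rename_bag, rename_bag]
      congr 1
      apply List.map_congr_left
      intro x hx
      exact ih ⟨x, hx⟩ (fun a ha => h a (Set.mem_biUnion hx ha))

lemma At_rename (f : A → A) (p : Pt A) : At (rename f p) = f '' At p := by
  induction p using At.induct with
  | case1 γ => simp only [rename]; rw [At_atom, At_atom]; simp
  | case2 ι => simp only [rename]; rw [At_star]; simp
  | case3 ι a b iha ihb => simp only [rename]; rw [At_pair, At_pair, iha, ihb, Set.image_union]
  | case4 ι l ih =>
      rw [rename_bag, At_bag, At_bag]
      ext a
      simp only [Set.mem_iUnion, List.mem_map, Set.mem_image]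
      constructor
      · rintro ⟨_, ⟨x, hx, rfl⟩, ha⟩
        rw [ih ⟨x, hx⟩] at ha
        obtain ⟨b, hb, rfl⟩ := ha
        exact ⟨b, ⟨x, hx, hb⟩, rfl⟩
      · rintro ⟨b, ⟨x, hx, hb⟩, rfl⟩
        exact ⟨rename f x, ⟨x, hx, rfl⟩, by rw [ih ⟨x, hx⟩]; exact ⟨b, hb, rfl⟩⟩

lemma rename_comp (f g : A → A) (p : Pt A) :
    rename g (rename f p) = rename (g ∘ f) p := by
  induction p using At.induct with
  | case1 γ => simp only [rename]; rfl
  | case2 ι => simp only [rename]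
  | case3 ι a b iha ihb => simp only [rename]; rw [iha, ihb]
  | case4 ι l ih =>
      rw [rename_bag, rename_bag, rename_bag, List.map_map]
      congr 1
      apply List.map_congr_left
      intro x hx
      exact ih ⟨x, hx⟩

lemma At_subset_AtT {n : ℕ} {r : Fin n → Multiset (Pt A)} {i : Fin n}
    {p : Pt A} (hp : p ∈ r i) : At p ⊆ AtT r := by
  intro a ha
  exact Set.mem_iUnion.2 ⟨i, Set.mem_biUnion hp ha⟩

lemma AtT_map (f : A → A) {n : ℕ} (r : Fin n → Multiset (Pt A)) :
    AtT (fun i => (r i).map (rename f)) = f '' AtT r := by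
  unfold AtT AtM
  ext a
  simp only [Set.mem_iUnion, Multiset.mem_map, Set.mem_image]
  constructor
  · rintro ⟨i, _, ⟨p, hp, rfl⟩, ha⟩
    rw [At_rename] at ha
    obtain ⟨b, hb, rfl⟩ := ha
    exact ⟨b, ⟨i, p, hp, hb⟩, rfl⟩
  · rintro ⟨b, ⟨i, p, hp, hb⟩, rfl⟩
    exact ⟨i, rename f p, ⟨p, hp, rfl⟩, by rw [At_rename]; exact ⟨b, hb, rfl⟩⟩

lemma iso_trans {n : ℕ} {r s t : Fin n → Multiset (Pt A)}
    (h1 : Iso r s) (h2 : Iso s t) : Iso r t := by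
  obtain ⟨f, d, hf, hd, hm⟩ := h1
  obtain ⟨g, e, hg, he, hm'⟩ := h2
  refine ⟨g ∘ f, AtT r, ?_, subset_rfl, ?_⟩
  · intro a ha b hb hab
    have hfs : (fun i => (r i).map (rename f)) = s := funext hm
    have hs : AtT s = f '' AtT r := by rw [← hfs, AtT_map]
    have hfa : f a ∈ AtT s := hs ▸ ⟨a, ha, rfl⟩
    have hfb : f b ∈ AtT s := hs ▸ ⟨b, hb, rfl⟩
    exact hf (hd ha) (hd hb) (hg (he hfa) (he hfb) hab)
  · intro i
    rw [← hm' i, ← hm i, Multiset.map_map]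
    congr 1
    funext p
    exact (rename_comp f g p).symm

/-- If all elements of `𝔟` are pairwise isomorphic with pairwise disjoint
atom sets (and likewise for `𝔟'`), some element of `𝔟` is isomorphic to some
element of `𝔟'`, and `|𝔟| = |𝔟'|`, then a single partial injection `f`
together with a bijection `φ : 𝔟 → 𝔟'` realizes all the isomorphisms. -/
theorem stmt16 (n : ℕ) (𝔟 𝔟' : Set (Fin n → Multiset (Pt A)))
    (hfin : 𝔟.Finite) (hfin' : 𝔟'.Finite)
    (h1 : ∀ r ∈ 𝔟, ∀ r' ∈ 𝔟, Iso r r')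
    (h1' : ∀ r ∈ 𝔟', ∀ r' ∈ 𝔟', Iso r r')
    (h2 : ∀ r ∈ 𝔟, ∀ r' ∈ 𝔟, r ≠ r' → AtT r ∩ AtT r' = ∅)
    (h2' : ∀ r ∈ 𝔟', ∀ r' ∈ 𝔟', r ≠ r' → AtT r ∩ AtT r' = ∅)
    (h3 : ∃ r ∈ 𝔟, ∃ r' ∈ 𝔟', Iso r r')
    (h4 : 𝔟.ncard = 𝔟'.ncard) :
    ∃ (f : A → A) (dom : Set A)
      (φ : (Fin n → Multiset (Pt A)) → (Fin n → Multiset (Pt A))),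
      Set.InjOn f dom ∧ Set.BijOn φ 𝔟 𝔟' ∧
      ∀ r ∈ 𝔟, AtT r ⊆ dom ∧ (fun i => (r i).map (rename f)) = φ r := by
  classical
  -- a bijection between the finite sets
  have hcard : hfin.toFinset.card = hfin'.toFinset.card := by
    rw [← Set.ncard_eq_toFinset_card 𝔟 hfin, ← Set.ncard_eq_toFinset_card 𝔟' hfin', h4]
  obtain ⟨e⟩ : Nonempty (hfin.toFinset ≃ hfin'.toFinset) :=
    ⟨Finset.equivOfCardEq hcard⟩
  set φ : (Fin n → Multiset (Pt A)) → (Fin n → Multiset (Pt A)) :=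
    fun x => if h : x ∈ 𝔟 then (e ⟨x, hfin.mem_toFinset.2 h⟩ : _) else x with hφ
  have hφ_mem : ∀ x ∈ 𝔟, φ x ∈ 𝔟' := by
    intro x hx
    simp only [hφ, dif_pos hx]
    exact hfin'.mem_toFinset.1 (e ⟨x, hfin.mem_toFinset.2 hx⟩).2
  have hφ_inj : Set.InjOn φ 𝔟 := by
    intro x hx y hy hxy
    simp only [hφ, dif_pos hx, dif_pos hy] at hxy
    have := e.injective (Subtype.ext hxy)
    exact Subtype.ext_iff.1 this
  have hφ_surj : Set.SurjOn φ 𝔟 𝔟' := by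
    intro y hy
    refine ⟨(e.symm ⟨y, hfin'.mem_toFinset.2 hy⟩ : _), ?_, ?_⟩
    · exact hfin.mem_toFinset.1 (e.symm ⟨y, hfin'.mem_toFinset.2 hy⟩).2
    · have hm := hfin.mem_toFinset.1 (e.symm ⟨y, hfin'.mem_toFinset.2 hy⟩).2
      simp only [hφ, dif_pos hm]
      rw [show (⟨_, hfin.mem_toFinset.2 hm⟩ : hfin.toFinset) =
        e.symm ⟨y, hfin'.mem_toFinset.2 hy⟩ from Subtype.ext rfl, e.apply_symm_apply]
  have hbij : Set.BijOn φ 𝔟 𝔟' := ⟨hφ_mem, hφ_inj, hφ_surj⟩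
  -- an isomorphism from each r to φ r
  obtain ⟨r₀, hr₀, r₀', hr₀', h00⟩ := h3
  have hiso : ∀ r, r ∈ 𝔟 → Iso r (φ r) := by
    intro r hr
    exact iso_trans (iso_trans (h1 r hr r₀ hr₀) h00)
      (h1' r₀' hr₀' (φ r) (hφ_mem r hr))
  choose fr dr hinj hsub hmap using hiso
  -- glue the isomorphisms
  set F : A → A := fun a =>
    if h : ∃ r, ∃ hr : r ∈ 𝔟, a ∈ AtT r then fr h.choose h.choose_spec.choose a
    else a with hF
  have key : ∀ r (hr : r ∈ 𝔟), ∀ a ∈ AtT r, F a = fr r hr a := by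
    intro r hr a ha
    have hex : ∃ s, ∃ hs : s ∈ 𝔟, a ∈ AtT s := ⟨r, hr, ha⟩
    simp only [hF, dif_pos hex]
    have hs : hex.choose ∈ 𝔟 := hex.choose_spec.choose
    have has : a ∈ AtT hex.choose := hex.choose_spec.choose_spec
    have heq : hex.choose = r := by
      by_contra hne
      have := h2 hex.choose hs r hr hne
      exact absurd (Set.mem_inter has ha) (by rw [this]; exact id)
    subst heq
    rfl
  -- atom sets of images
  have hAt : ∀ r (hr : r ∈ 𝔟), AtT (φ r) = fr r hr '' AtT r := by
    intro r hr
    rw [← funext (hmap r hr), AtT_map]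
  refine ⟨F, ⋃ r ∈ 𝔟, AtT r, φ, ?_, hbij, ?_⟩
  · -- injectivity
    rintro a ha b hb hab
    obtain ⟨r, hr, har⟩ := Set.mem_iUnion₂.1 ha
    obtain ⟨s, hs, hbs⟩ := Set.mem_iUnion₂.1 hb
    rw [key r hr a har, key s hs b hbs] at hab
    by_cases hrs : r = s
    · subst hrs
      exact hinj r hr (hsub r hr har) (hsub r hr hbs) hab
    · exfalso
      have h1a : fr r hr a ∈ AtT (φ r) := (hAt r hr) ▸ ⟨a, har, rfl⟩
      have h1b : fr s hs b ∈ AtT (φ s) := (hAt s hs) ▸ ⟨b, hbs, rfl⟩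
      have hne : φ r ≠ φ s := fun h => hrs (hφ_inj hr hs h)
      have := h2' (φ r) (hφ_mem r hr) (φ s) (hφ_mem s hs) hne
      rw [hab] at h1a
      exact absurd (Set.mem_inter h1a h1b) (by rw [this]; exact id)
  · intro r hr
    refine ⟨Set.subset_biUnion_of_mem hr, ?_⟩
    funext i
    rw [← hmap r hr i]
    apply Multiset.map_congr rfl
    intro p hp
    exact rename_congr p (fun a ha => key r hr a (At_subset_AtT hp ha))

end Pt
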